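/- arXiv:1812.06560 — 2 statements merged into one kernel-verified Lean document; each statement's English description precedes it below -/
import Mathlib

section
/- Multivariate orthonormal polynomials exist with the prescribed degrees: for every n such that rank M̃_k(μ) ≥ n+1 for some k, one may construct polynomials p_0^μ, ..., p_n^μ orthonormal in L²(μ) with deg p_n^μ = k_n^μ := min{k ≥ 0 : rank M̃_k(μ) = n+1} (in particular k_0^μ = 0). Moreover, for k = k_n^μ there exists an invertible upper triangular (k+1)×(k+1) matrix R̃_k(μ) such that R̃_k(μ)* · M̃_k(μ) · R̃_k(μ) = E_k(μ) · E_k(μ)*, where E_k(μ) = (δ_{j, k_ℓ^μ})_{j=0,...,k, ℓ=0,...,n}; the submatrix M_n(μ) := E_k(μ)* · M̃_k(μ) · E_k(μ) is a maximal invertible submatrix of M̃_k(μ); and with the upper triangular invertible matrix R_n(μ) := E_k(μ)* · R̃_k(μ) · E_k(μ) one has R_n(μ)* · M_n(μ) · R_n(μ) = I and (p_0^μ(z), ..., p_n^μ(z)) = v_k(z) · E_k(μ) · R_n(μ). -/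
open MeasureTheory Matrix Finset

namespace CD

variable {d : ℕ}

/-- The `L²(μ)` inner product of two polynomial functions. -/
noncomputable def inner2 (μ : Measure (Fin d → ℂ)) (f g : MvPolynomial (Fin d) ℂ) : ℂ :=
  ∫ z, MvPolynomial.eval z f * (starRingEnd ℂ) (MvPolynomial.eval z g) ∂μ

/-- The moment matrix `M̃_k(μ)` for an enumeration `α` of multi-indices. -/
noncomputable def momentMatrix (μ : Measure (Fin d → ℂ)) (α : ℕ → (Fin d →₀ ℕ)) (k : ℕ) :
    Matrix (Fin (k + 1)) (Fin (k + 1)) ℂ :=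
  Matrix.of fun j ℓ =>
    inner2 μ (MvPolynomial.monomial (α (ℓ : ℕ)) 1) (MvPolynomial.monomial (α (j : ℕ)) 1)

/-- `k_n^μ = min {k : rank M̃_k(μ) = n+1}`. -/
noncomputable def kdeg (μ : Measure (Fin d → ℂ)) (α : ℕ → (Fin d →₀ ℕ)) (n : ℕ) : ℕ :=
  sInf {k | (momentMatrix μ α k).rank = n + 1}

/-- `deg p ≤ k` with respect to the enumeration `α`. -/
def DegLE (α : ℕ → (Fin d →₀ ℕ)) (p : MvPolynomial (Fin d) ℂ) (k : ℕ) : Prop :=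
  ∀ m : ℕ, MvPolynomial.coeff (α m) p ≠ 0 → m ≤ k

/-- `deg p = k` with respect to the enumeration `α`. -/
def DegEq (α : ℕ → (Fin d →₀ ℕ)) (p : MvPolynomial (Fin d) ℂ) (k : ℕ) : Prop :=
  DegLE α p k ∧ MvPolynomial.coeff (α k) p ≠ 0

/-- An admissible enumeration of all multi-indices: a bijection starting at `0` such that
multiplication by any variable increases the index. -/
def AdmissibleEnum (α : ℕ → (Fin d →₀ ℕ)) : Prop :=
  Function.Bijective α ∧ α 0 = 0 ∧
    ∀ (j : Fin d) (n : ℕ), ∃ k : ℕ, n < k ∧ α k = α n + Finsupp.single j 1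

/-- The Christoffel–Darboux kernel `K_n(z,w) = ∑_{j≤n} p_j(z) conj (p_j(w))`. -/
noncomputable def CDkernel (p : ℕ → MvPolynomial (Fin d) ℂ) (n : ℕ) (z w : Fin d → ℂ) : ℂ :=
  ∑ j ∈ Finset.range (n + 1),
    MvPolynomial.eval z (p j) * (starRingEnd ℂ) (MvPolynomial.eval w (p j))

/-- `p_0, …, p_n` is the Gram–Schmidt orthonormal family in `L²(μ)`:
orthonormal, with `p_m` a linear combination of the monomials `z^{α(k_0)},…,z^{α(k_m)}`
with positive (real) leading coefficient. -/
def IsONBasisUpTo (μ : Measure (Fin d → ℂ)) (α : ℕ → (Fin d →₀ ℕ))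
    (p : ℕ → MvPolynomial (Fin d) ℂ) (n : ℕ) : Prop :=
  (∀ i ≤ n, ∀ j ≤ n, inner2 μ (p i) (p j) = if i = j then 1 else 0) ∧
  (∀ m ≤ n, ∃ c : Fin (m + 1) → ℂ, 0 < (c (Fin.last m)).re ∧ (c (Fin.last m)).im = 0 ∧
      p m = ∑ i : Fin (m + 1), MvPolynomial.monomial (α (kdeg μ α (i : ℕ))) (c i))

/-- The full Gram–Schmidt orthonormal sequence of `μ`. -/
def IsONBasis (μ : Measure (Fin d → ℂ)) (α : ℕ → (Fin d →₀ ℕ))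
    (p : ℕ → MvPolynomial (Fin d) ℂ) : Prop :=
  ∀ n, IsONBasisUpTo μ α p n

/-- The (closed) support of a measure. -/
def msupport {X : Type*} [TopologicalSpace X] [MeasurableSpace X] (μ : Measure X) : Set X :=
  {x | ∀ U : Set X, x ∈ U → IsOpen U → μ U ≠ 0}

/-- `𝒩(μ)`: the ideal of polynomials vanishing on `supp(μ)`. -/
def Nideal (μ : Measure (Fin d → ℂ)) : Set (MvPolynomial (Fin d) ℂ) :=
  {q | ∀ z ∈ msupport μ, MvPolynomial.eval z q = 0}

/-- `𝒩_n(μ) = {p ∈ 𝒩(μ) : deg p ≤ k_n^μ}`. -/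
def NidealLE (μ : Measure (Fin d → ℂ)) (α : ℕ → (Fin d →₀ ℕ)) (n : ℕ) :
    Set (MvPolynomial (Fin d) ℂ) :=
  {q | q ∈ Nideal μ ∧ DegLE α q (kdeg μ α n)}

/-- `𝒮_n(μ)`: the common zero set of `𝒩_n(μ)`. -/
def Svariety (μ : Measure (Fin d → ℂ)) (α : ℕ → (Fin d →₀ ℕ)) (n : ℕ) : Set (Fin d → ℂ) :=
  {z | ∀ q ∈ NidealLE μ α n, MvPolynomial.eval z q = 0}

/-- `𝒮(μ)`: the Zariski closure of `supp(μ)`, i.e. the common zero set of `𝒩(μ)`. -/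
def Szar (μ : Measure (Fin d → ℂ)) : Set (Fin d → ℂ) :=
  {z | ∀ q ∈ Nideal μ, MvPolynomial.eval z q = 0}

/-- `ℒ_n(μ)`: the span of `p_0,…,p_n`. -/
def Lspan (p : ℕ → MvPolynomial (Fin d) ℂ) (n : ℕ) : Set (MvPolynomial (Fin d) ℂ) :=
  {q | ∃ c : Fin (n + 1) → ℂ, q = ∑ j : Fin (n + 1), c j • p (j : ℕ)}

/-- The `L²(μ)` norm of a polynomial. -/
noncomputable def norm2 (μ : Measure (Fin d → ℂ)) (f : MvPolynomial (Fin d) ℂ) : ℝ :=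
  Real.sqrt ((inner2 μ f f).re)

/-- Multivariate cosine function `C_n(z,w)`. -/
noncomputable def coskM (p : ℕ → MvPolynomial (Fin d) ℂ) (n : ℕ) (z w : Fin d → ℂ) : ℂ :=
  CDkernel p n z w /
    ((Real.sqrt ((CDkernel p n z z).re) * Real.sqrt ((CDkernel p n w w).re) : ℝ) : ℂ)



/-- `E_k(μ)` with `k = k_n^μ`: the 0/1 matrix selecting the pivot monomials. -/
noncomputable def Emat (μ : Measure (Fin d → ℂ)) (α : ℕ → (Fin d →₀ ℕ)) (n : ℕ) :
    Matrix (Fin (kdeg μ α n + 1)) (Fin (n + 1)) ℂ :=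
  Matrix.of fun i j => if (i : ℕ) = kdeg μ α (j : ℕ) then 1 else 0

lemma compl_msupport_eq (μ : Measure (Fin d → ℂ)) :
    ∃ S : Set (Set (Fin d → ℂ)), S.Countable ∧ (∀ U ∈ S, IsOpen U ∧ μ U = 0) ∧
      (msupport μ)ᶜ = ⋃₀ S := by
  obtain ⟨B, hBc, -, hB⟩ := TopologicalSpace.exists_countable_basis (Fin d → ℂ)
  refine ⟨{U ∈ B | μ U = 0}, hBc.mono (Set.sep_subset _ _),
    fun U hU => ⟨hB.isOpen hU.1, hU.2⟩, ?_⟩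
  ext x
  simp only [msupport, Set.mem_compl_iff, Set.mem_setOf_eq, not_forall, Set.mem_sUnion]
  constructor
  · rintro ⟨U, hxU, hU, hμU⟩
    push_neg at hμU
    obtain ⟨V, hVB, hxV, hVU⟩ := hB.isOpen_iff.mp hU x hxU
    exact ⟨V, ⟨hVB, le_antisymm (hμU ▸ measure_mono hVU) zero_le⟩, hxV⟩
  · rintro ⟨U, ⟨hUB, hμU⟩, hxU⟩
    exact ⟨U, hxU, hB.isOpen hUB, fun h => h hμU⟩

lemma isClosed_msupport (μ : Measure (Fin d → ℂ)) : IsClosed (msupport μ) := by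
  obtain ⟨S, _, hS, h⟩ := compl_msupport_eq μ
  rw [← isOpen_compl_iff, h]
  exact isOpen_sUnion fun U hU => (hS U hU).1

lemma measure_compl_msupport (μ : Measure (Fin d → ℂ)) : μ (msupport μ)ᶜ = 0 := by
  obtain ⟨S, hSc, hS, h⟩ := compl_msupport_eq μ
  rw [h, measure_sUnion_null_iff hSc]
  exact fun U hU => (hS U hU).2

lemma integrable_mul_conj (μ : Measure (Fin d → ℂ)) [IsFiniteMeasure μ]
    (hμc : IsCompact (msupport μ)) (f g : MvPolynomial (Fin d) ℂ) :
    Integrable (fun z => MvPolynomial.eval z f * (starRingEnd ℂ) (MvPolynomial.eval z g)) μ := by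
  have hc : Continuous (fun z => MvPolynomial.eval z f * (starRingEnd ℂ) (MvPolynomial.eval z g)) :=
    (MvPolynomial.continuous_eval f).mul (Complex.continuous_conj.comp (MvPolynomial.continuous_eval g))
  have h1 : IntegrableOn (fun z => MvPolynomial.eval z f * (starRingEnd ℂ) (MvPolynomial.eval z g))
      (msupport μ) μ := hc.continuousOn.integrableOn_compact hμc
  have h2 : μ.restrict (msupport μ) = μ :=
    Measure.restrict_eq_self_of_ae_mem
      (by rw [ae_iff]; exact measure_compl_msupport μ)
  rwa [IntegrableOn, h2] at h1
variable (μ : Measure (Fin d → ℂ))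
variable (hint : ∀ f g : MvPolynomial (Fin d) ℂ,
    Integrable (fun z => MvPolynomial.eval z f * (starRingEnd ℂ) (MvPolynomial.eval z g)) μ)

omit hint in
lemma inner2_conj (f g : MvPolynomial (Fin d) ℂ) :
    inner2 μ g f = (starRingEnd ℂ) (inner2 μ f g) := by
  rw [inner2, inner2, ← integral_conj]
  congr 1; ext z; simp [mul_comm]

omit hint in
lemma inner2_smul_left (c : ℂ) (f g : MvPolynomial (Fin d) ℂ) :
    inner2 μ (c • f) g = c * inner2 μ f g := by
  have h : (fun z => MvPolynomial.eval z (c • f) * (starRingEnd ℂ) (MvPolynomial.eval z g))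
      = fun z => c • (MvPolynomial.eval z f * (starRingEnd ℂ) (MvPolynomial.eval z g)) := by
    ext z; simp [MvPolynomial.smul_eval, mul_assoc]
  rw [inner2, h, integral_smul, inner2, smul_eq_mul]

omit hint in
lemma inner2_smul_right (c : ℂ) (f g : MvPolynomial (Fin d) ℂ) :
    inner2 μ f (c • g) = (starRingEnd ℂ) c * inner2 μ f g := by
  have h : (fun z => MvPolynomial.eval z f * (starRingEnd ℂ) (MvPolynomial.eval z (c • g)))
      = fun z => (starRingEnd ℂ) c •
        (MvPolynomial.eval z f * (starRingEnd ℂ) (MvPolynomial.eval z g)) := by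
    ext z; simp [MvPolynomial.smul_eval]; ring
  rw [inner2, h, integral_smul, inner2, smul_eq_mul]

include hint in
lemma inner2_sub_left (f₁ f₂ g : MvPolynomial (Fin d) ℂ) :
    inner2 μ (f₁ - f₂) g = inner2 μ f₁ g - inner2 μ f₂ g := by
  have h : (fun z => MvPolynomial.eval z (f₁ - f₂) * (starRingEnd ℂ) (MvPolynomial.eval z g))
      = fun z => (MvPolynomial.eval z f₁ * (starRingEnd ℂ) (MvPolynomial.eval z g))
        - (MvPolynomial.eval z f₂ * (starRingEnd ℂ) (MvPolynomial.eval z g)) := by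
    ext z; simp [sub_mul]
  rw [inner2, h, integral_sub (hint f₁ g) (hint f₂ g)]; rfl

include hint in
lemma inner2_sum_left {ι : Type*} (s : Finset ι) (f : ι → MvPolynomial (Fin d) ℂ)
    (g : MvPolynomial (Fin d) ℂ) :
    inner2 μ (∑ i ∈ s, f i) g = ∑ i ∈ s, inner2 μ (f i) g := by
  have h : (fun z => MvPolynomial.eval z (∑ i ∈ s, f i) * (starRingEnd ℂ) (MvPolynomial.eval z g))
      = fun z => ∑ i ∈ s, (MvPolynomial.eval z (f i) * (starRingEnd ℂ) (MvPolynomial.eval z g)) := by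
    ext z; simp [Finset.sum_mul]
  rw [inner2, h, integral_finset_sum s (fun i _ => hint (f i) g)]; rfl

include hint in
lemma inner2_sum_right {ι : Type*} (s : Finset ι) (f : MvPolynomial (Fin d) ℂ)
    (g : ι → MvPolynomial (Fin d) ℂ) :
    inner2 μ f (∑ i ∈ s, g i) = ∑ i ∈ s, inner2 μ f (g i) := by
  have h : (fun z => MvPolynomial.eval z f * (starRingEnd ℂ) (MvPolynomial.eval z (∑ i ∈ s, g i)))
      = fun z => ∑ i ∈ s, (MvPolynomial.eval z f * (starRingEnd ℂ) (MvPolynomial.eval z (g i))) := by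
    ext z; simp [Finset.mul_sum]
  rw [inner2, h, integral_finset_sum s (fun i _ => hint f (g i))]; rfl

include hint in
lemma inner2_self_im (f : MvPolynomial (Fin d) ℂ) : (inner2 μ f f).im = 0 := by
  rw [inner2, ← RCLike.im_to_complex, ← integral_im (hint f f)]
  rw [← integral_zero (Fin d → ℂ) ℝ (μ := μ)]
  congr 1; ext z
  simp [RCLike.im_to_complex, Complex.mul_conj]

include hint in
lemma inner2_self_re_nonneg (f : MvPolynomial (Fin d) ℂ) : 0 ≤ (inner2 μ f f).re := by
  rw [inner2, ← RCLike.re_to_complex, ← integral_re (hint f f)]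
  apply integral_nonneg
  intro z
  simp only [RCLike.re_to_complex, Complex.mul_conj, Complex.ofReal_re]
  exact Complex.normSq_nonneg _

include hint in
lemma inner2_self_eq (f : MvPolynomial (Fin d) ℂ) :
    inner2 μ f f = (((inner2 μ f f).re : ℝ) : ℂ) := by
  apply Complex.ext <;> simp [inner2_self_im μ hint f]

include hint in
lemma inner2_eq_zero_of_self {f : MvPolynomial (Fin d) ℂ} (g : MvPolynomial (Fin d) ℂ)
    (h : inner2 μ f f = 0) : inner2 μ g f = 0 := by
  have hns : Integrable (fun z => Complex.normSq (MvPolynomial.eval z f)) μ := by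
    have h2 := (hint f f).re
    have he : (fun z => RCLike.re (MvPolynomial.eval z f * (starRingEnd ℂ) (MvPolynomial.eval z f)))
        = fun z => Complex.normSq (MvPolynomial.eval z f) := by
      ext z; simp only [RCLike.re_to_complex, Complex.mul_conj, Complex.ofReal_re]
    rwa [he] at h2
  have h0 : ∫ z, Complex.normSq (MvPolynomial.eval z f) ∂μ = 0 := by
    have h2 : (inner2 μ f f).re = ∫ z, Complex.normSq (MvPolynomial.eval z f) ∂μ := by
      rw [inner2, ← RCLike.re_to_complex, ← integral_re (hint f f)]
      congr 1; ext z; simp only [RCLike.re_to_complex, Complex.mul_conj, Complex.ofReal_re]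
    rw [h] at h2; simpa using h2.symm
  have hae := (integral_eq_zero_iff_of_nonneg (fun z => Complex.normSq_nonneg _) hns).mp h0
  rw [inner2, ← integral_zero (Fin d → ℂ) ℂ (μ := μ)]
  apply integral_congr_ae
  filter_upwards [hae] with z hz
  have hz' : Complex.normSq (MvPolynomial.eval z f) = 0 := by simpa using hz
  have : MvPolynomial.eval z f = 0 := by rwa [Complex.normSq_eq_zero] at hz'
  simp [this]

noncomputable def gs (μ : Measure (Fin d → ℂ)) (α : ℕ → (Fin d →₀ ℕ)) : ℕ → MvPolynomial (Fin d) ℂ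
  | i => MvPolynomial.monomial (α i) 1 - ∑ j ∈ (Finset.range i).attach,
      (if inner2 μ (gs μ α j) (gs μ α j) = 0 then 0
       else inner2 μ (MvPolynomial.monomial (α i) 1) (gs μ α j) / inner2 μ (gs μ α j) (gs μ α j))
        • gs μ α j
  termination_by i => i
  decreasing_by exact Finset.mem_range.mp j.2

lemma gs_eq (μ : Measure (Fin d → ℂ)) (α : ℕ → (Fin d →₀ ℕ)) (i : ℕ) :
    gs μ α i = MvPolynomial.monomial (α i) 1 - ∑ j ∈ (Finset.range i).attach,
      (if inner2 μ (gs μ α j) (gs μ α j) = 0 then 0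
       else inner2 μ (MvPolynomial.monomial (α i) 1) (gs μ α j) / inner2 μ (gs μ α j) (gs μ α j))
        • gs μ α j := by
  rw [gs]

include hint in
lemma gs_orth (α : ℕ → (Fin d →₀ ℕ)) :
    ∀ i j, j < i → inner2 μ (gs μ α i) (gs μ α j) = 0 := by
  intro i
  induction i using Nat.strong_induction_on with
  | _ i IH =>
    intro j hj
    by_cases hGj : inner2 μ (gs μ α j) (gs μ α j) = 0
    · exact inner2_eq_zero_of_self μ hint _ hGj
    · rw [gs_eq μ α i, inner2_sub_left μ hint, inner2_sum_left μ hint]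
      have hsum : ∑ j' ∈ (Finset.range i).attach,
          inner2 μ ((if inner2 μ (gs μ α j') (gs μ α j') = 0 then 0
            else inner2 μ (MvPolynomial.monomial (α i) 1) (gs μ α j') /
              inner2 μ (gs μ α j') (gs μ α j')) • gs μ α j') (gs μ α j)
          = inner2 μ (MvPolynomial.monomial (α i) 1) (gs μ α j) := by
        rw [Finset.sum_eq_single_of_mem ⟨j, Finset.mem_range.mpr hj⟩ (Finset.mem_attach _ _)]
        · rw [inner2_smul_left, if_neg hGj, div_mul_cancel₀]
          exact hGj
        · intro b _ hb
          rw [inner2_smul_left]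
          have hbj : (b : ℕ) ≠ j := fun h => hb (Subtype.ext h)
          rcases lt_or_gt_of_ne hbj with h | h
          · have h0 : inner2 μ (gs μ α (b : ℕ)) (gs μ α j) = 0 := by
              rw [inner2_conj μ (gs μ α j) (gs μ α (b : ℕ)), IH j hj (b : ℕ) h, map_zero]
            rw [h0, mul_zero]
          · rw [IH (b : ℕ) (Finset.mem_range.mp b.2) j h, mul_zero]
      rw [hsum, sub_self]

lemma gs_coeff_high (α : ℕ → (Fin d →₀ ℕ)) (hαi : Function.Injective α) :
    ∀ i t, i < t → MvPolynomial.coeff (α t) (gs μ α i) = 0 := by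
  intro i
  induction i using Nat.strong_induction_on with
  | _ i IH =>
    intro t ht
    rw [gs_eq μ α i, MvPolynomial.coeff_sub, MvPolynomial.coeff_monomial,
      if_neg (fun h => (Nat.ne_of_lt ht) (hαi h))]
    rw [MvPolynomial.coeff_sum]
    rw [Finset.sum_eq_zero, sub_zero]
    intro b _
    rw [MvPolynomial.coeff_smul, IH (b : ℕ) (Finset.mem_range.mp b.2) t
      (lt_trans (Finset.mem_range.mp b.2) ht), smul_zero]

lemma gs_coeff_diag (α : ℕ → (Fin d →₀ ℕ)) (hαi : Function.Injective α) (i : ℕ) :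
    MvPolynomial.coeff (α i) (gs μ α i) = 1 := by
  rw [gs_eq μ α i, MvPolynomial.coeff_sub, MvPolynomial.coeff_monomial, if_pos rfl,
    MvPolynomial.coeff_sum, Finset.sum_eq_zero, sub_zero]
  intro b _
  rw [MvPolynomial.coeff_smul,
    gs_coeff_high μ α hαi (b : ℕ) i (Finset.mem_range.mp b.2), smul_zero]

lemma gs_coeff_bad (α : ℕ → (Fin d →₀ ℕ)) (hαi : Function.Injective α) :
    ∀ i t, inner2 μ (gs μ α t) (gs μ α t) = 0 → t ≠ i →
      MvPolynomial.coeff (α t) (gs μ α i) = 0 := by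
  intro i
  induction i using Nat.strong_induction_on with
  | _ i IH =>
    intro t hGt hti
    rw [gs_eq μ α i, MvPolynomial.coeff_sub, MvPolynomial.coeff_monomial,
      if_neg (fun h => hti (hαi h).symm), MvPolynomial.coeff_sum,
      Finset.sum_eq_zero, sub_zero]
    intro b _
    by_cases hGb : inner2 μ (gs μ α b) (gs μ α b) = 0
    · rw [if_pos hGb, zero_smul, MvPolynomial.coeff_zero]
    · rw [MvPolynomial.coeff_smul, IH (b : ℕ) (Finset.mem_range.mp b.2) t hGt
        (fun h => hGb (h ▸ hGt)), smul_zero]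

def good (μ : Measure (Fin d → ℂ)) (α : ℕ → (Fin d →₀ ℕ)) (i : ℕ) : Prop :=
  inner2 μ (gs μ α i) (gs μ α i) ≠ 0

noncomputable def nuGS (μ : Measure (Fin d → ℂ)) (α : ℕ → (Fin d →₀ ℕ)) (i : ℕ) : ℝ :=
  Real.sqrt ((inner2 μ (gs μ α i) (gs μ α i)).re)

open scoped Classical in
noncomputable def sigGS (μ : Measure (Fin d → ℂ)) (α : ℕ → (Fin d →₀ ℕ)) (i : ℕ) : ℂ :=
  if good μ α i then ((nuGS μ α i)⁻¹ : ℂ) else 1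

noncomputable def gsn (μ : Measure (Fin d → ℂ)) (α : ℕ → (Fin d →₀ ℕ)) (i : ℕ) :
    MvPolynomial (Fin d) ℂ :=
  sigGS μ α i • gs μ α i

open scoped Classical in
noncomputable def cnt (μ : Measure (Fin d → ℂ)) (α : ℕ → (Fin d →₀ ℕ)) (k : ℕ) : ℕ :=
  ((Finset.range k).filter (good μ α)).card

variable (α : ℕ → (Fin d →₀ ℕ))

include hint in
lemma nuGS_pos {i : ℕ} (h : good μ α i) : 0 < nuGS μ α i := by
  apply Real.sqrt_pos.mpr
  rcases lt_or_eq_of_le (inner2_self_re_nonneg μ hint (gs μ α i)) with h' | h'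
  · exact h'
  · exfalso; apply h
    rw [inner2_self_eq μ hint (gs μ α i), ← h']
    simp

include hint in
lemma sigGS_ne_zero (i : ℕ) : sigGS μ α i ≠ 0 := by
  rw [sigGS]
  split
  · next h =>
    simp only [ne_eq, Complex.ofReal_eq_zero, inv_eq_zero]
    exact_mod_cast (ne_of_gt (nuGS_pos μ hint α h))
  · exact one_ne_zero

open scoped Classical in
include hint in
lemma inner2_gsn_self (i : ℕ) :
    inner2 μ (gsn μ α i) (gsn μ α i) = if good μ α i then 1 else 0 := by
  rw [gsn, inner2_smul_left, inner2_smul_right]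
  by_cases h : good μ α i
  · rw [if_pos h, sigGS, if_pos h, map_inv₀, Complex.conj_ofReal]
    rw [inner2_self_eq μ hint (gs μ α i)]
    have hν : 0 < nuGS μ α i := nuGS_pos μ hint α h
    have hre : (inner2 μ (gs μ α i) (gs μ α i)).re = nuGS μ α i * nuGS μ α i :=
      (Real.mul_self_sqrt (inner2_self_re_nonneg μ hint (gs μ α i))).symm
    rw [hre]
    push_cast
    field_simp
    exact div_self (by exact_mod_cast ne_of_gt hν)
  · rw [if_neg h]
    have h0 : inner2 μ (gs μ α i) (gs μ α i) = 0 := not_not.mp h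
    rw [h0, mul_zero, mul_zero]

include hint in
lemma inner2_gsn_ne {i j : ℕ} (hij : i ≠ j) :
    inner2 μ (gsn μ α i) (gsn μ α j) = 0 := by
  rw [gsn, gsn, inner2_smul_left, inner2_smul_right]
  rcases lt_or_gt_of_ne hij with h | h
  · rw [inner2_conj μ (gs μ α j) (gs μ α i), gs_orth μ hint α j i h, map_zero,
      mul_zero, mul_zero]
  · rw [gs_orth μ hint α i j h, mul_zero, mul_zero]

omit hint in
lemma gsn_coeff_high (hαi : Function.Injective α) {i t : ℕ} (h : i < t) :
    MvPolynomial.coeff (α t) (gsn μ α i) = 0 := by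
  rw [gsn, MvPolynomial.coeff_smul, gs_coeff_high μ α hαi i t h, smul_zero]

omit hint in
lemma gsn_coeff_diag (hαi : Function.Injective α) (i : ℕ) :
    MvPolynomial.coeff (α i) (gsn μ α i) = sigGS μ α i := by
  rw [gsn, MvPolynomial.coeff_smul, gs_coeff_diag μ α hαi i, smul_eq_mul, mul_one]

omit hint in
lemma gsn_coeff_bad (hαi : Function.Injective α) {i t : ℕ} (hGt : ¬ good μ α t) (hti : t ≠ i) :
    MvPolynomial.coeff (α t) (gsn μ α i) = 0 := by
  rw [gsn, MvPolynomial.coeff_smul, gs_coeff_bad μ α hαi i t (not_not.mp hGt) hti, smul_zero]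

omit hint in
lemma poly_eq_sum (hαb : Function.Bijective α) (q : MvPolynomial (Fin d) ℂ) (k : ℕ)
    (hq : ∀ t, MvPolynomial.coeff (α t) q ≠ 0 → t ≤ k) :
    q = ∑ t : Fin (k + 1), MvPolynomial.monomial (α (t : ℕ)) (MvPolynomial.coeff (α (t : ℕ)) q) := by
  apply MvPolynomial.ext
  intro s
  obtain ⟨t0, rfl⟩ := hαb.2 s
  rw [MvPolynomial.coeff_sum]
  by_cases ht0 : t0 ≤ k
  · rw [Finset.sum_eq_single (⟨t0, Nat.lt_succ_of_le ht0⟩ : Fin (k + 1))]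
    · rw [MvPolynomial.coeff_monomial, if_pos rfl]
    · intro b _ hb
      rw [MvPolynomial.coeff_monomial, if_neg]
      intro h
      exact hb (Fin.ext (hαb.1 h))
    · intro h; exact absurd (Finset.mem_univ _) h
  · rw [Finset.sum_eq_zero]
    · by_contra h
      exact ht0 (hq t0 h)
    · intro b _
      rw [MvPolynomial.coeff_monomial, if_neg]
      intro h
      exact ht0 ((hαb.1 h : (b : ℕ) = t0) ▸ (Nat.lt_succ_iff.mp b.2))

noncomputable def Rmat (μ : Measure (Fin d → ℂ)) (α : ℕ → (Fin d →₀ ℕ)) (k : ℕ) :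
    Matrix (Fin (k + 1)) (Fin (k + 1)) ℂ :=
  Matrix.of fun t i => MvPolynomial.coeff (α (t : ℕ)) (gsn μ α (i : ℕ))

omit hint in
lemma Rmat_triangular (hαi : Function.Injective α) (k : ℕ) :
    (Rmat μ α k).BlockTriangular id := by
  intro i j h
  exact gsn_coeff_high μ α hαi (show (j : ℕ) < (i : ℕ) from h)

include hint in
lemma Rmat_isUnit (hαi : Function.Injective α) (k : ℕ) : IsUnit (Rmat μ α k) := by
  rw [Matrix.isUnit_iff_isUnit_det, Matrix.det_of_upperTriangular (Rmat_triangular μ α hαi k)]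
  rw [isUnit_iff_ne_zero]
  apply Finset.prod_ne_zero_iff.mpr
  intro i _
  rw [Rmat, Matrix.of_apply, gsn_coeff_diag μ α hαi]
  exact sigGS_ne_zero μ hint α _

include hint in
lemma inner2_combo (k : ℕ) (a b : Fin (k + 1) → ℂ) :
    inner2 μ (∑ t : Fin (k + 1), MvPolynomial.monomial (α (t : ℕ)) (a t))
      (∑ s : Fin (k + 1), MvPolynomial.monomial (α (s : ℕ)) (b s)) =
    ∑ s : Fin (k + 1), ∑ t : Fin (k + 1),
      (starRingEnd ℂ) (b s) * (momentMatrix μ α k s t * a t) := by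
  have hm : ∀ (t : Fin (k + 1)) (c : Fin (k+1) → ℂ),
      MvPolynomial.monomial (α (t : ℕ)) (c t) = c t • MvPolynomial.monomial (α (t : ℕ)) 1 := by
    intro t c; rw [MvPolynomial.smul_monomial, smul_eq_mul, mul_one]
  rw [inner2_sum_left μ hint]
  rw [Finset.sum_comm]
  apply Finset.sum_congr rfl
  intro t _
  rw [inner2_sum_right μ hint]
  apply Finset.sum_congr rfl
  intro s _
  rw [hm t a, hm s b, inner2_smul_left, inner2_smul_right]
  rw [momentMatrix, Matrix.of_apply]
  ring

omit hint in
lemma gsn_eq_sum (hαb : Function.Bijective α) {k i : ℕ} (hik : i ≤ k) :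
    gsn μ α i = ∑ t : Fin (k + 1),
      MvPolynomial.monomial (α (t : ℕ)) (MvPolynomial.coeff (α (t : ℕ)) (gsn μ α i)) := by
  apply poly_eq_sum α hαb
  intro t ht
  by_contra h
  exact ht (gsn_coeff_high μ α hαb.1 (lt_of_le_of_lt hik (Nat.lt_of_not_le h)))

open scoped Classical in
include hint in
lemma Rmat_factor (hαb : Function.Bijective α) (k : ℕ) :
    (Rmat μ α k)ᴴ * momentMatrix μ α k * Rmat μ α k =
      Matrix.diagonal (fun i : Fin (k + 1) => if good μ α (i : ℕ) then 1 else 0) := by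
  ext i j
  have hij : ((Rmat μ α k)ᴴ * momentMatrix μ α k * Rmat μ α k) i j
      = inner2 μ (gsn μ α (j : ℕ)) (gsn μ α (i : ℕ)) := by
    rw [gsn_eq_sum μ α hαb (Nat.lt_succ_iff.mp j.2),
      gsn_eq_sum μ α hαb (Nat.lt_succ_iff.mp i.2), inner2_combo μ hint α k,
      Finset.sum_comm]
    rw [Matrix.mul_apply]
    apply Finset.sum_congr rfl
    intro t _
    rw [Matrix.mul_apply, Finset.sum_mul]
    apply Finset.sum_congr rfl
    intro s _
    rw [Matrix.conjTranspose_apply, Rmat, Matrix.of_apply, Matrix.of_apply]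
    simp only [starRingEnd_apply]
    ring
  rw [hij]
  by_cases h : i = j
  · subst h
    rw [inner2_gsn_self μ hint α, Matrix.diagonal_apply_eq]
  · rw [inner2_gsn_ne μ hint α (fun hc => h (Fin.ext hc).symm)]
    exact (Matrix.diagonal_apply_ne _ h).symm

open scoped Classical in
include hint in
lemma rank_moment (hαb : Function.Bijective α) (k : ℕ) :
    (momentMatrix μ α k).rank = cnt μ α (k + 1) := by
  have hR := Rmat_isUnit μ hint α hαb.1 k
  have hRdet : IsUnit (Rmat μ α k).det := (Matrix.isUnit_iff_isUnit_det _).mp hR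
  have hRHdet : IsUnit ((Rmat μ α k)ᴴ).det := by
    rw [Matrix.det_conjTranspose]; exact hRdet.star
  have h1 : ((Rmat μ α k)ᴴ * momentMatrix μ α k * Rmat μ α k).rank
      = (momentMatrix μ α k).rank := by
    rw [Matrix.rank_mul_eq_left_of_isUnit_det _ _ hRdet,
      Matrix.rank_mul_eq_right_of_isUnit_det _ _ hRHdet]
  rw [← h1, Rmat_factor μ hint α hαb, Matrix.rank_diagonal]
  calc Fintype.card {i : Fin (k+1) // (if good μ α (i : ℕ) then (1:ℂ) else 0) ≠ 0}
      = Fintype.card {i : Fin (k+1) // good μ α (i : ℕ)} := by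
        apply Fintype.card_congr
        apply Equiv.subtypeEquivRight
        intro i
        by_cases h : good μ α (i : ℕ) <;> simp [h]
    _ = (Finset.univ.filter (fun i : Fin (k+1) => good μ α (i : ℕ))).card :=
        Fintype.card_subtype _
    _ = ∑ i : Fin (k+1), if good μ α (i : ℕ) then 1 else 0 := Finset.card_filter _ _
    _ = ∑ i ∈ Finset.range (k+1), if good μ α i then 1 else 0 :=
        Fin.sum_univ_eq_sum_range (fun i => if good μ α i then 1 else 0) (k+1)
    _ = cnt μ α (k+1) := (Finset.card_filter _ _).symm

omit hint in
lemma cnt_zero : cnt μ α 0 = 0 := by simp [cnt]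

open scoped Classical in
omit hint in
lemma cnt_succ (k : ℕ) :
    cnt μ α (k + 1) = cnt μ α k + (if good μ α k then 1 else 0) := by
  rw [cnt, cnt, Finset.range_add_one, Finset.filter_insert]
  split
  · rw [Finset.card_insert_of_notMem (fun h => (Finset.mem_range.mp (Finset.mem_filter.mp h).1).false)]
  · rw [add_zero]

open scoped Classical in
omit hint in
lemma cnt_mono : Monotone (cnt μ α) := by
  intro a b hab
  exact Finset.card_le_card (Finset.filter_subset_filter _ (Finset.range_subset_range.mpr hab))

lemma nat_ivt (f : ℕ → ℕ) (hstep : ∀ k, f (k + 1) ≤ f k + 1) (t : ℕ) (h0 : f 0 ≤ t) :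
    ∀ K, t ≤ f K → ∃ k, f k = t := by
  intro K
  induction K with
  | zero => exact fun h => ⟨0, le_antisymm (le_of_le_of_eq h0 rfl) h⟩
  | succ K IH =>
    intro h
    by_cases h' : t ≤ f K
    · exact IH h'
    · have h1 := hstep K
      exact ⟨K + 1, le_antisymm (by omega) h⟩

omit hint in
lemma good_zero [IsFiniteMeasure μ] (hμ0 : μ ≠ 0) (hα0 : α 0 = 0) : good μ α 0 := by
  have hgs : gs μ α 0 = MvPolynomial.monomial (α 0) 1 := by
    rw [gs_eq]; simp
  rw [good, hgs, hα0]
  have h1 : inner2 μ (MvPolynomial.monomial (0 : Fin d →₀ ℕ) 1)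
      (MvPolynomial.monomial (0 : Fin d →₀ ℕ) 1) = ((μ Set.univ).toReal : ℂ) := by
    have he : (fun z : Fin d → ℂ => MvPolynomial.eval z (MvPolynomial.monomial (0 : Fin d →₀ ℕ) (1:ℂ))
        * (starRingEnd ℂ) (MvPolynomial.eval z (MvPolynomial.monomial (0 : Fin d →₀ ℕ) (1:ℂ))))
        = fun _ => (1 : ℂ) := by
      ext z; simp
    rw [inner2, he, integral_const]
    simp
    rfl
  rw [h1]
  simp only [ne_eq, Complex.ofReal_eq_zero]
  exact ENNReal.toReal_ne_zero.mpr ⟨Measure.measure_univ_ne_zero.mpr hμ0, measure_ne_top μ _⟩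

include hint in
lemma kdeg_cnt (hαb : Function.Bijective α) (m : ℕ) (hne : ∃ k, cnt μ α (k + 1) = m + 1) :
    cnt μ α (kdeg μ α m + 1) = m + 1 ∧ (∀ k, cnt μ α (k + 1) = m + 1 → kdeg μ α m ≤ k) := by
  have hset : {k | (momentMatrix μ α k).rank = m + 1} = {k | cnt μ α (k + 1) = m + 1} := by
    ext k
    rw [Set.mem_setOf_eq, Set.mem_setOf_eq, rank_moment μ hint α hαb k]
  rw [kdeg, hset]
  exact ⟨Nat.sInf_mem hne, fun k hk => Nat.sInf_le hk⟩

open scoped Classical in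
include hint in
lemma kdeg_cnt_self (hαb : Function.Bijective α) (m : ℕ)
    (hne : ∃ k, cnt μ α (k + 1) = m + 1) :
    cnt μ α (kdeg μ α m) = m ∧ good μ α (kdeg μ α m) := by
  obtain ⟨h1, hmin⟩ := kdeg_cnt μ hint α hαb m hne
  have hle : cnt μ α (kdeg μ α m) ≤ m := by
    rcases Nat.eq_zero_or_pos (kdeg μ α m) with h | h
    · rw [h, cnt_zero]; exact Nat.zero_le m
    · obtain ⟨s, hs⟩ := Nat.exists_eq_succ_of_ne_zero (Nat.pos_iff_ne_zero.mp h)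
      rw [Nat.succ_eq_add_one] at hs
      have hne2 : cnt μ α (s + 1) ≠ m + 1 := by
        intro hc
        have := hmin s hc
        omega
      have hmono : cnt μ α (s + 1) ≤ cnt μ α (kdeg μ α m + 1) :=
        cnt_mono μ α (by omega)
      rw [hs]
      show cnt μ α (s + 1) ≤ m
      omega
  have h2 := cnt_succ μ α (kdeg μ α m)
  by_cases hg : good μ α (kdeg μ α m)
  · rw [if_pos hg] at h2
    exact ⟨by omega, hg⟩
  · rw [if_neg hg] at h2
    omega

include hint in
lemma kdeg_strictmono (hαb : Function.Bijective α) {ℓ m : ℕ} (hlm : ℓ < m)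
    (hneℓ : ∃ k, cnt μ α (k + 1) = ℓ + 1) (hnem : ∃ k, cnt μ α (k + 1) = m + 1) :
    kdeg μ α ℓ < kdeg μ α m := by
  obtain ⟨h1, -⟩ := kdeg_cnt μ hint α hαb ℓ hneℓ
  obtain ⟨h2, -⟩ := kdeg_cnt μ hint α hαb m hnem
  by_contra h
  push_neg at h
  have := cnt_mono μ α (show kdeg μ α m + 1 ≤ kdeg μ α ℓ + 1 by omega)
  omega

include hint in
lemma good_eq_kdeg (hαb : Function.Bijective α) {n i : ℕ} (hi : i ≤ kdeg μ α n)
    (hgi : good μ α i) (hnen : ∃ k, cnt μ α (k + 1) = n + 1) :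
    ∃ ℓ, ℓ ≤ n ∧ kdeg μ α ℓ = i := by
  classical
  obtain ⟨hn1, -⟩ := kdeg_cnt μ hint α hαb n hnen
  obtain ⟨hnn, -⟩ := kdeg_cnt_self μ hint α hαb n hnen
  refine ⟨cnt μ α i, ?_, ?_⟩
  · have : cnt μ α i ≤ cnt μ α (kdeg μ α n) := cnt_mono μ α hi
    omega
  · have hib : cnt μ α (i + 1) = cnt μ α i + 1 := by
      rw [cnt_succ μ α i, if_pos hgi]
    have hset : {k | (momentMatrix μ α k).rank = cnt μ α i + 1}
        = {k | cnt μ α (k + 1) = cnt μ α i + 1} := by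
      ext k
      rw [Set.mem_setOf_eq, Set.mem_setOf_eq, rank_moment μ hint α hαb k]
    rw [kdeg, hset]
    apply le_antisymm
    · exact Nat.sInf_le (show i ∈ {k | cnt μ α (k + 1) = cnt μ α i + 1} from hib)
    · apply le_csInf ⟨i, show i ∈ {k | cnt μ α (k + 1) = cnt μ α i + 1} from hib⟩
      intro k hk
      by_contra hlt
      push_neg at hlt
      have : cnt μ α (k + 1) ≤ cnt μ α i := cnt_mono μ α (by omega)
      rw [Set.mem_setOf_eq] at hk
      omega

/-- Existence of multivariate orthonormal polynomials with the prescribed degrees,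
together with the triangular factorization of the moment matrix. -/
theorem statement0 (μ : Measure (Fin d → ℂ)) [IsFiniteMeasure μ]
    (hμ0 : μ ≠ 0) (hμc : IsCompact (msupport μ))
    (α : ℕ → (Fin d →₀ ℕ)) (hα : AdmissibleEnum α)
    (n : ℕ) (hn : ∃ k : ℕ, n + 1 ≤ (momentMatrix μ α k).rank) :
    kdeg μ α 0 = 0 ∧
    ∃ p : ℕ → MvPolynomial (Fin d) ℂ,
      (∀ i ≤ n, ∀ j ≤ n, inner2 μ (p i) (p j) = if i = j then 1 else 0) ∧
      (∀ m ≤ n, DegEq α (p m) (kdeg μ α m)) ∧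
      ∃ Rt : Matrix (Fin (kdeg μ α n + 1)) (Fin (kdeg μ α n + 1)) ℂ,
        IsUnit Rt ∧ Rt.BlockTriangular id ∧
        Rtᴴ * momentMatrix μ α (kdeg μ α n) * Rt = Emat μ α n * (Emat μ α n)ᴴ ∧
        IsUnit ((Emat μ α n)ᴴ * momentMatrix μ α (kdeg μ α n) * Emat μ α n) ∧
        (momentMatrix μ α (kdeg μ α n)).rank = n + 1 ∧
        ((Emat μ α n)ᴴ * Rt * Emat μ α n).BlockTriangular id ∧
        IsUnit ((Emat μ α n)ᴴ * Rt * Emat μ α n) ∧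
        ((Emat μ α n)ᴴ * Rt * Emat μ α n)ᴴ *
            ((Emat μ α n)ᴴ * momentMatrix μ α (kdeg μ α n) * Emat μ α n) *
            ((Emat μ α n)ᴴ * Rt * Emat μ α n) = 1 ∧
        ∀ j : Fin (n + 1),
          p (j : ℕ) = ∑ i : Fin (kdeg μ α n + 1),
            MvPolynomial.monomial (α (i : ℕ))
              ((Emat μ α n * ((Emat μ α n)ᴴ * Rt * Emat μ α n)) i j) := by
  classical
  obtain ⟨hαb, hα0, -⟩ := hα
  have hint : ∀ f g : MvPolynomial (Fin d) ℂ,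
      Integrable (fun z => MvPolynomial.eval z f * (starRingEnd ℂ) (MvPolynomial.eval z g)) μ :=
    integrable_mul_conj μ hμc
  have hg0 : good μ α 0 := good_zero μ α hμ0 hα0
  have hcnt1 : cnt μ α 1 = 1 := by
    rw [cnt_succ μ α 0, if_pos hg0, cnt_zero]
  have hstep : ∀ k, cnt μ α (k + 1) ≤ cnt μ α k + 1 := by
    intro k
    rw [cnt_succ μ α k]
    split <;> omega
  -- existence of levels
  have hne : ∀ m, m ≤ n → ∃ k, cnt μ α (k + 1) = m + 1 := by
    obtain ⟨K, hK⟩ := hn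
    rw [rank_moment μ hint α hαb K] at hK
    intro m hm
    exact nat_ivt (fun k => cnt μ α (k + 1)) (fun k => hstep (k + 1)) (m + 1)
      (by show cnt μ α 1 ≤ m + 1; omega) K (by show m + 1 ≤ cnt μ α (K + 1); omega)
  have hkz : kdeg μ α 0 = 0 := by
    rw [kdeg, Nat.sInf_eq_zero]
    left
    rw [Set.mem_setOf_eq, rank_moment μ hint α hαb 0, hcnt1]
  refine ⟨hkz, ?_⟩
  -- kdeg facts
  have hk1 : ∀ m, m ≤ n → cnt μ α (kdeg μ α m + 1) = m + 1 :=
    fun m hm => (kdeg_cnt μ hint α hαb m (hne m hm)).1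
  have hkgood : ∀ m, m ≤ n → good μ α (kdeg μ α m) :=
    fun m hm => (kdeg_cnt_self μ hint α hαb m (hne m hm)).2
  have hksm : ∀ ℓ m, ℓ < m → m ≤ n → kdeg μ α ℓ < kdeg μ α m :=
    fun ℓ m h hm => kdeg_strictmono μ hint α hαb h (hne ℓ (by omega)) (hne m hm)
  have hkle : ∀ m, m ≤ n → kdeg μ α m ≤ kdeg μ α n := by
    intro m hm
    rcases lt_or_eq_of_le hm with h | h
    · exact le_of_lt (hksm m n h le_rfl)
    · rw [h]
  have hkinj : ∀ ℓ m, ℓ ≤ n → m ≤ n → kdeg μ α ℓ = kdeg μ α m → ℓ = m := by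
    intro ℓ m hℓ hm h
    by_contra hne'
    rcases lt_or_gt_of_ne hne' with h' | h'
    · exact absurd h (ne_of_lt (hksm ℓ m h' hm))
    · exact absurd h.symm (ne_of_lt (hksm m ℓ h' hℓ))
  set kk := kdeg μ α n with hkk
  have hembL : ∀ ℓ : Fin (n + 1), kdeg μ α (ℓ : ℕ) < kk + 1 :=
    fun ℓ => Nat.lt_succ_of_le (hkle _ (Nat.lt_succ_iff.mp ℓ.2))
  set e : Fin (n + 1) → Fin (kk + 1) := fun ℓ => ⟨kdeg μ α (ℓ : ℕ), hembL ℓ⟩ with he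
  have heval : ∀ ℓ : Fin (n + 1), ((e ℓ) : ℕ) = kdeg μ α (ℓ : ℕ) := by
    intro ℓ; rw [he]
  set E := Emat μ α n with hE
  set M := momentMatrix μ α kk with hM
  set Rt := Rmat μ α kk with hRt
  have hEentry : ∀ (i : Fin (kk + 1)) (ℓ : Fin (n + 1)),
      E i ℓ = if i = e ℓ then 1 else 0 := by
    intro i ℓ
    rw [hE, Emat, Matrix.of_apply]
    congr 1
    rw [eq_iff_iff]
    constructor
    · intro h
      apply Fin.ext
      rw [heval]
      exact h
    · intro h
      rw [h, heval]
  -- lifting goods to pivots, as Fin equalities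
  have hgoodfin : ∀ i : Fin (kk + 1), good μ α (i : ℕ) →
      ∃ ℓ : Fin (n + 1), i = e ℓ := by
    intro i hgi
    obtain ⟨ℓ0, hℓ0n, hℓ0⟩ := good_eq_kdeg μ hint α hαb
      (Nat.lt_succ_iff.mp i.2) hgi (hne n le_rfl)
    refine ⟨⟨ℓ0, Nat.lt_succ_of_le hℓ0n⟩, ?_⟩
    apply Fin.ext
    rw [heval]
    exact hℓ0.symm
  have hgoode : ∀ ℓ : Fin (n + 1), good μ α ((e ℓ) : ℕ) := by
    intro ℓ
    rw [heval]
    exact hkgood _ (Nat.lt_succ_iff.mp ℓ.2)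
  have heinj : ∀ ℓ m : Fin (n + 1), e ℓ = e m → ℓ = m := by
    intro ℓ m h
    apply Fin.ext
    apply hkinj _ _ (Nat.lt_succ_iff.mp ℓ.2) (Nat.lt_succ_iff.mp m.2)
    have := congrArg Fin.val h
    rwa [heval, heval] at this
  set p : ℕ → MvPolynomial (Fin d) ℂ := fun m => gsn μ α (kdeg μ α m) with hp
  refine ⟨p, ?_, ?_, ?_⟩
  · -- orthonormality
    intro i hi j hj
    by_cases h : i = j
    · subst h
      rw [if_pos rfl, hp, inner2_gsn_self μ hint α, if_pos (hkgood i hi)]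
    · rw [if_neg h, hp]
      exact inner2_gsn_ne μ hint α (fun hc => h (hkinj i j hi hj hc))
  · -- degrees
    intro m hm
    constructor
    · intro t ht
      by_contra hlt
      exact ht (gsn_coeff_high μ α hαb.1 (Nat.lt_of_not_le hlt))
    · rw [hp, gsn_coeff_diag μ α hαb.1]
      exact sigGS_ne_zero μ hint α _
  · -- matrices
    refine ⟨Rt, Rmat_isUnit μ hint α hαb.1 kk, Rmat_triangular μ α hαb.1 kk, ?_⟩
    have hfac := Rmat_factor μ hint α hαb kk
    have hEEH : E * Eᴴ = Matrix.diagonal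
        (fun i : Fin (kk + 1) => if good μ α (i : ℕ) then 1 else 0) := by
      ext i j
      rw [Matrix.mul_apply]
      simp only [hEentry, Matrix.conjTranspose_apply]
      by_cases hij : i = j
      · subst hij
        by_cases hgi : good μ α (i : ℕ)
        · obtain ⟨ℓ0, hie⟩ := hgoodfin i hgi
          rw [Finset.sum_eq_single ℓ0, Matrix.diagonal_apply_eq, if_pos hgi]
          · rw [if_pos hie]; simp
          · intro b _ hb
            have hnb : ¬ i = e b := fun hc => hb (heinj b ℓ0 (hc.symm.trans hie))
            simp [hnb]
          · intro h; exact absurd (Finset.mem_univ _) h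
        · rw [Finset.sum_eq_zero, Matrix.diagonal_apply_eq, if_neg hgi]
          intro b _
          have hnb : ¬ i = e b := fun hc => hgi (hc ▸ hgoode b)
          simp [hnb]
      · rw [Finset.sum_eq_zero, Matrix.diagonal_apply_ne _ hij]
        intro b _
        by_cases h1 : i = e b
        · have h2 : ¬ j = e b := fun h2 => hij (h1.trans h2.symm)
          simp [h2]
        · simp [h1]
    have hfacE : Rtᴴ * M * Rt = E * Eᴴ := by rw [hfac, hEEH]
    have hEE : Eᴴ * E = 1 := by
      ext ℓ j
      rw [Matrix.mul_apply]
      simp only [hEentry, Matrix.conjTranspose_apply]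
      by_cases h : ℓ = j
      · subst h
        rw [Finset.sum_eq_single (e ℓ), Matrix.one_apply_eq]
        · simp
        · intro b _ hb
          simp [hb]
        · intro h; exact absurd (Finset.mem_univ _) h
      · rw [Finset.sum_eq_zero, Matrix.one_apply_ne h]
        intro b _
        by_cases h1 : b = e ℓ
        · have h2 : ¬ b = e j := fun h2 => h (heinj ℓ j ((h1.symm.trans h2)))
          simp [h2]
        · simp [h1]
    set X := Eᴴ * Rt * E with hX
    have hRE_entry : ∀ (s : Fin (kk + 1)) (j : Fin (n + 1)),
        (Rt * E) s j = MvPolynomial.coeff (α (s : ℕ)) (gsn μ α (kdeg μ α (j : ℕ))) := by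
      intro s j
      rw [Matrix.mul_apply, Finset.sum_eq_single (e j)]
      · rw [hEentry, if_pos rfl, mul_one, hRt, Rmat, Matrix.of_apply, heval]
      · intro b _ hb
        rw [hEentry, if_neg hb, mul_zero]
      · intro h; exact absurd (Finset.mem_univ _) h
    have hX_entry : ∀ (ℓ j : Fin (n + 1)),
        X ℓ j = MvPolynomial.coeff (α (kdeg μ α (ℓ : ℕ))) (gsn μ α (kdeg μ α (j : ℕ))) := by
      intro ℓ j
      rw [hX, Matrix.mul_assoc, Matrix.mul_apply, Finset.sum_eq_single (e ℓ)]
      · rw [Matrix.conjTranspose_apply, hEentry, if_pos rfl, star_one, one_mul,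
          hRE_entry, heval]
      · intro b _ hb
        rw [Matrix.conjTranspose_apply, hEentry, if_neg hb, star_zero, zero_mul]
      · intro h; exact absurd (Finset.mem_univ _) h
    have hRE : Rt * E = E * X := by
      ext s j
      rw [hRE_entry, Matrix.mul_apply]
      by_cases hgs : good μ α (s : ℕ)
      · obtain ⟨ℓ0, hse⟩ := hgoodfin s hgs
        rw [Finset.sum_eq_single ℓ0]
        · rw [hEentry, if_pos hse, one_mul, hX_entry]
          congr 2
          rw [← heval ℓ0, ← hse]
        · intro b _ hb
          have hnb : ¬ s = e b := fun hc => hb (heinj b ℓ0 (hc.symm.trans hse))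
          rw [hEentry, if_neg hnb, zero_mul]
        · intro h; exact absurd (Finset.mem_univ _) h
      · rw [Finset.sum_eq_zero, gsn_coeff_bad μ α hαb.1 hgs]
        · intro hc
          apply hgs
          rw [hc]
          exact hkgood _ (Nat.lt_succ_iff.mp j.2)
        · intro b _
          have hnb : ¬ s = e b := fun hc => hgs (hc ▸ hgoode b)
          rw [hEentry, if_neg hnb, zero_mul]
    have hmain : Xᴴ * (Eᴴ * M * E) * X = 1 := by
      calc Xᴴ * (Eᴴ * M * E) * X = (E * X)ᴴ * M * (E * X) := by
            simp only [Matrix.conjTranspose_mul, Matrix.mul_assoc]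
        _ = (Rt * E)ᴴ * M * (Rt * E) := by rw [hRE]
        _ = Eᴴ * (Rtᴴ * M * Rt) * E := by
            simp only [Matrix.conjTranspose_mul, Matrix.mul_assoc]
        _ = Eᴴ * (E * Eᴴ) * E := by rw [hfacE]
        _ = (Eᴴ * E) * (Eᴴ * E) := by simp only [Matrix.mul_assoc]
        _ = 1 := by rw [hEE, one_mul]
    have hXtri : X.BlockTriangular id := by
      intro ℓ j h
      rw [hX_entry]
      exact gsn_coeff_high μ α hαb.1
        (hksm _ _ (show (j : ℕ) < (ℓ : ℕ) from h) (Nat.lt_succ_iff.mp ℓ.2))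
    have hXunit : IsUnit X := by
      rw [Matrix.isUnit_iff_isUnit_det, Matrix.det_of_upperTriangular hXtri, isUnit_iff_ne_zero]
      apply Finset.prod_ne_zero_iff.mpr
      intro ℓ _
      rw [hX_entry, gsn_coeff_diag μ α hαb.1]
      exact sigGS_ne_zero μ hint α _
    have hGunit : IsUnit (Eᴴ * M * E) := by
      rw [Matrix.isUnit_iff_isUnit_det]
      have hdet : (Xᴴ).det * (Eᴴ * M * E).det * X.det = 1 := by
        rw [← Matrix.det_mul, ← Matrix.det_mul, hmain, Matrix.det_one]
      exact IsUnit.of_mul_eq_one ((Xᴴ).det * X.det) (by rw [← hdet]; ring)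
    refine ⟨hfacE, hGunit, ?_, hXtri, hXunit, hmain, ?_⟩
    · rw [hM, rank_moment μ hint α hαb, hkk, hk1 n le_rfl]
    · intro j
      have hcol : ∀ i : Fin (kk + 1), (E * X) i j
          = MvPolynomial.coeff (α (i : ℕ)) (gsn μ α (kdeg μ α (j : ℕ))) := by
        intro i
        rw [← hRE, hRE_entry]
      calc p (j : ℕ) = gsn μ α (kdeg μ α (j : ℕ)) := rfl
        _ = ∑ i : Fin (kk + 1), MvPolynomial.monomial (α (i : ℕ))
              (MvPolynomial.coeff (α (i : ℕ)) (gsn μ α (kdeg μ α (j : ℕ)))) :=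
            gsn_eq_sum μ α hαb (hkle _ (Nat.lt_succ_iff.mp j.2))
        _ = ∑ i : Fin (kk + 1), MvPolynomial.monomial (α (i : ℕ)) ((E * X) i j) := by
            apply Finset.sum_congr rfl
            intro i _
            rw [hcol]

end CD
end

section
/- Let k, n ∈ ℕ with k_n^μ ≤ k < k_{n+1}^μ, and let p be a polynomial of degree ≤ k. Then the polynomial q(z) := ∫ K_n^μ(z,w)·p(w) dμ(w) satisfies q ∈ ℒ_n(μ) and p − q ∈ 𝒩_{n+1}(μ). In particular, for k = k_n^μ = deg p_n^μ, one has 𝒩_n(μ) = {p ∈ ℂ[z] : deg p ≤ deg p_n^μ and ⟨p, p_j^μ⟩_{2,μ} = 0 for j = 0,...,n}. -/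
open MeasureTheory Matrix Finset

namespace CD

variable {d : ℕ}

/-! ### Auxiliary machinery for `statement1` -/

section Aux

lemma msupport_compl_null {X : Type*} [TopologicalSpace X] [MeasurableSpace X]
    [SecondCountableTopology X] (μ : Measure X) : μ (msupport μ)ᶜ = 0 := by
  obtain ⟨B, hBc, -, hB⟩ := TopologicalSpace.exists_countable_basis X
  have hsub : (msupport μ)ᶜ ⊆ ⋃₀ {b ∈ B | μ b = 0} := by
    intro x hx
    simp only [msupport, Set.mem_compl_iff, Set.mem_setOf_eq, not_forall] at hx
    obtain ⟨U, hxU, hUo, hU0⟩ := hx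
    rw [not_not] at hU0
    obtain ⟨b, hbB, hxb, hbU⟩ := hB.exists_subset_of_mem_open hxU hUo
    exact ⟨b, ⟨hbB, measure_mono_null hbU hU0⟩, hxb⟩
  refine measure_mono_null hsub ?_
  exact (measure_sUnion_null_iff (hBc.mono (Set.sep_subset _ _))).mpr fun s hs => hs.2

lemma ae_mem_msupport {X : Type*} [TopologicalSpace X] [MeasurableSpace X]
    [SecondCountableTopology X] (μ : Measure X) : ∀ᵐ x ∂μ, x ∈ msupport μ := by
  rw [ae_iff]
  exact msupport_compl_null μ

variable {μ : Measure (Fin d → ℂ)} [IsFiniteMeasure μ]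

lemma exists_bound_msupport (hμc : IsCompact (msupport μ)) {h : (Fin d → ℂ) → ℂ}
    (hh : Continuous h) : ∃ C : ℝ, ∀ᵐ x ∂μ, ‖h x‖ ≤ C := by
  obtain ⟨C, hC⟩ : ∃ C, ∀ x ∈ msupport μ, ‖h x‖ ≤ C := by
    rcases (msupport μ).eq_empty_or_nonempty with he | hne
    · exact ⟨0, by simp [he]⟩
    · obtain ⟨x, -, hmax⟩ := hμc.exists_isMaxOn hne (hh.norm.continuousOn)
      exact ⟨‖h x‖, hmax⟩
  exact ⟨C, by filter_upwards [ae_mem_msupport μ] with x hx using hC x hx⟩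

lemma integrable_of_cont (hμc : IsCompact (msupport μ)) {h : (Fin d → ℂ) → ℂ}
    (hh : Continuous h) : Integrable h μ := by
  obtain ⟨C, hC⟩ := exists_bound_msupport hμc hh
  exact Integrable.mono' (integrable_const C) hh.aestronglyMeasurable hC

lemma memL2_of_cont (hμc : IsCompact (msupport μ)) {h : (Fin d → ℂ) → ℂ}
    (hh : Continuous h) : MemLp h 2 μ := by
  obtain ⟨C, hC⟩ := exists_bound_msupport hμc hh
  exact MemLp.of_bound hh.aestronglyMeasurable C hC

lemma eval_eq_zero_on_msupport {Q : MvPolynomial (Fin d) ℂ}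
    (h : (fun z => MvPolynomial.eval z Q) =ᵐ[μ] 0) :
    ∀ z ∈ msupport μ, MvPolynomial.eval z Q = 0 := by
  intro z hz
  by_contra hne
  have hopen : IsOpen {w : Fin d → ℂ | MvPolynomial.eval w Q ≠ 0} := by
    have : {w : Fin d → ℂ | MvPolynomial.eval w Q ≠ 0}
        = ((fun w => MvPolynomial.eval w Q) ⁻¹' {0})ᶜ := by
      ext w; simp
    rw [this]
    exact (isClosed_singleton.preimage (MvPolynomial.continuous_eval Q)).isOpen_compl
  refine hz _ hne hopen ?_
  have := ae_iff.mp h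
  simpa using this

end Aux

section Phi

variable (μ : Measure (Fin d → ℂ)) [IsFiniteMeasure μ] (hμc : IsCompact (msupport μ))

/-- `MemLp` witness for a polynomial. -/
noncomputable def mem2 (f : MvPolynomial (Fin d) ℂ) :
    MemLp (fun z => MvPolynomial.eval z f) 2 μ :=
  memL2_of_cont hμc (MvPolynomial.continuous_eval f)

/-- The natural linear map from polynomials to `L²(μ)`. -/
noncomputable def phiL : MvPolynomial (Fin d) ℂ →ₗ[ℂ] Lp ℂ 2 μ where
  toFun f := (mem2 μ hμc f).toLp _
  map_add' f g := by
    rw [← MemLp.toLp_add (mem2 μ hμc f) (mem2 μ hμc g)]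
    refine (MemLp.toLp_eq_toLp_iff (mem2 μ hμc (f + g)) ((mem2 μ hμc f).add (mem2 μ hμc g))).mpr ?_
    exact Filter.Eventually.of_forall fun z => by simp
  map_smul' c f := by
    rw [RingHom.id_apply, ← MemLp.toLp_const_smul c (mem2 μ hμc f)]
    refine (MemLp.toLp_eq_toLp_iff (mem2 μ hμc (c • f)) ((mem2 μ hμc f).const_smul c)).mpr ?_
    exact Filter.Eventually.of_forall fun z => by simp [MvPolynomial.smul_eval]

lemma coeFn_phiL (f : MvPolynomial (Fin d) ℂ) :
    (phiL μ hμc f : (Fin d → ℂ) → ℂ) =ᵐ[μ] fun z => MvPolynomial.eval z f :=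
  MemLp.coeFn_toLp (mem2 μ hμc f)

lemma inner_phiL (f g : MvPolynomial (Fin d) ℂ) :
    (inner ℂ (phiL μ hμc g) (phiL μ hμc f) : ℂ) = inner2 μ f g := by
  rw [L2.inner_def, inner2]
  refine integral_congr_ae ?_
  filter_upwards [coeFn_phiL μ hμc f, coeFn_phiL μ hμc g] with z h1 h2
  rw [h1, h2, RCLike.inner_apply, mul_comm]

lemma phiL_eq_zero_iff (f : MvPolynomial (Fin d) ℂ) :
    phiL μ hμc f = 0 ↔ (fun z => MvPolynomial.eval z f) =ᵐ[μ] 0 := by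
  constructor
  · intro h
    have h2 := coeFn_phiL μ hμc f
    rw [h] at h2
    exact h2.symm.trans (Lp.coeFn_zero ℂ 2 μ)
  · intro h
    have h2 : phiL μ hμc f = (MemLp.zero : MemLp (0 : (Fin d → ℂ) → ℂ) 2 μ).toLp 0 :=
      (MemLp.toLp_eq_toLp_iff (mem2 μ hμc f) MemLp.zero).mpr h
    rw [h2, MemLp.toLp_zero]

end Phi

section Gram

variable {E : Type*} [NormedAddCommGroup E] [InnerProductSpace ℂ E]

lemma rank_gram {N : ℕ} (u : Fin N → E) :
    (Matrix.of fun j ℓ : Fin N => (inner ℂ (u j) (u ℓ) : ℂ)).rank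
      = Module.finrank ℂ (Submodule.span ℂ (Set.range u)) := by
  classical
  set G := Matrix.of fun j ℓ : Fin N => (inner ℂ (u j) (u ℓ) : ℂ) with hG
  set T : (Fin N → ℂ) →ₗ[ℂ] E :=
    { toFun := fun c => ∑ ℓ, c ℓ • u ℓ
      map_add' := fun a b => by simp [add_smul, Finset.sum_add_distrib]
      map_smul' := fun a b => by simp [smul_smul, Finset.smul_sum] } with hT
  have hGc : ∀ c j, G.mulVecLin c j = (inner ℂ (u j) (T c) : ℂ) := by
    intro c j
    simp only [hG, hT, Matrix.mulVecLin_apply, Matrix.mulVec, dotProduct, inner_sum,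
      inner_smul_right, LinearMap.coe_mk, AddHom.coe_mk, Matrix.of_apply]
    exact Finset.sum_congr rfl fun x _ => mul_comm _ _
  have hker : LinearMap.ker G.mulVecLin = LinearMap.ker T := by
    ext c
    simp only [LinearMap.mem_ker]
    constructor
    · intro hc
      have h0 : ∀ j, (inner ℂ (u j) (T c) : ℂ) = 0 := fun j => by
        rw [← hGc c j, hc]; rfl
      have h1 : (inner ℂ (T c) (T c) : ℂ) = 0 := by
        have h2 : T c = ∑ ℓ, c ℓ • u ℓ := rfl
        rw [h2, sum_inner]
        have h3 : ∀ j : Fin N, (inner ℂ (c j • u j) (T c) : ℂ) = 0 := fun j => by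
          rw [inner_smul_left, h0 j, mul_zero]
        simp only [hT, LinearMap.coe_mk, AddHom.coe_mk] at h3 ⊢
        exact Finset.sum_eq_zero fun j _ => h3 j
      exact inner_self_eq_zero.mp h1
    · intro hc
      funext j
      rw [hGc c j, hc, inner_zero_right]; rfl
  have hrange : LinearMap.range T = Submodule.span ℂ (Set.range u) := by
    ext x
    simp [LinearMap.mem_range, Submodule.mem_span_range_iff_exists_fun, hT, eq_comm]
  have h1 := LinearMap.finrank_range_add_finrank_ker G.mulVecLin
  have h2 := LinearMap.finrank_range_add_finrank_ker T
  have hrk : G.rank = Module.finrank ℂ (LinearMap.range G.mulVecLin) := rfl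
  rw [hker] at h1
  rw [hrange] at h2
  simp only [Module.finrank_fintype_fun_eq_card, Fintype.card_fin] at h1 h2
  omega

lemma span_repr {N : ℕ} {e : Fin N → E} (he : Orthonormal ℂ e) {x : E}
    (hx : x ∈ Submodule.span ℂ (Set.range e)) :
    ∑ j, (inner ℂ (e j) x : ℂ) • e j = x := by
  obtain ⟨c, rfl⟩ := (Submodule.mem_span_range_iff_exists_fun ℂ).mp hx
  refine Finset.sum_congr rfl fun j _ => ?_
  rw [he.inner_right_fintype]

end Gram

lemma exists_eq_of_le' {F : ℕ → ℕ} (h0 : F 0 = 1)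
    (hstep : ∀ j, F j ≤ F (j + 1) ∧ F (j + 1) ≤ F j + 1)
    {m K : ℕ} (hm : 1 ≤ m) (hK : m ≤ F K) : ∃ j ≤ K, F j = m := by
  induction K with
  | zero => exact ⟨0, le_rfl, by omega⟩
  | succ K ih =>
    by_cases h : m ≤ F K
    · obtain ⟨j, hj, he⟩ := ih h
      exact ⟨j, hj.trans (Nat.le_succ K), he⟩
    · exact ⟨K + 1, le_rfl, by have := hstep K; omega⟩

section WF

variable (μ : Measure (Fin d → ℂ)) [IsFiniteMeasure μ] (hμc : IsCompact (msupport μ))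
  (α : ℕ → (Fin d →₀ ℕ))

/-- The image of the `m`-th monomial in `L²(μ)`. -/
noncomputable def gfun (m : ℕ) : Lp ℂ 2 μ :=
  phiL μ hμc (MvPolynomial.monomial (α m) 1)

/-- The span of the images of the monomials of index `≤ k` in `L²(μ)`. -/
noncomputable def Wsp (k : ℕ) : Submodule ℂ (Lp ℂ 2 μ) :=
  Submodule.span ℂ (gfun μ hμc α '' Set.Iic k)

/-- The dimension of `Wsp`. -/
noncomputable def Ffun (k : ℕ) : ℕ := Module.finrank ℂ (Wsp μ hμc α k)

lemma finiteDimensional_Wsp (k : ℕ) : FiniteDimensional ℂ (Wsp μ hμc α k) :=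
  FiniteDimensional.span_of_finite ℂ ((Set.finite_Iic k).image _)

lemma rank_momentMatrix_eq (k : ℕ) :
    (momentMatrix μ α k).rank = Ffun μ hμc α k := by
  have h1 : momentMatrix μ α k
      = Matrix.of fun j ℓ : Fin (k + 1) =>
          (inner ℂ (gfun μ hμc α (j : ℕ)) (gfun μ hμc α (ℓ : ℕ)) : ℂ) := by
    ext j ℓ
    exact (inner_phiL μ hμc _ _).symm
  rw [h1, rank_gram]
  have h2 : Set.range (fun j : Fin (k + 1) => gfun μ hμc α (j : ℕ))
      = gfun μ hμc α '' Set.Iic k := by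
    ext x
    constructor
    · rintro ⟨j, rfl⟩
      exact ⟨j, Nat.lt_succ_iff.mp j.isLt, rfl⟩
    · rintro ⟨m, hm, rfl⟩
      exact ⟨⟨m, Nat.lt_succ_of_le hm⟩, rfl⟩
  rw [Ffun, Wsp, h2]

lemma Ffun_mono : Monotone (Ffun μ hμc α) := by
  refine monotone_nat_of_le_succ fun k => ?_
  haveI := finiteDimensional_Wsp μ hμc α (k + 1)
  exact Submodule.finrank_mono
    (Submodule.span_mono (Set.image_mono (Set.Iic_subset_Iic.mpr (Nat.le_succ k))))

lemma Ffun_step (k : ℕ) : Ffun μ hμc α (k + 1) ≤ Ffun μ hμc α k + 1 := by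
  have h1 : Set.Iic (k + 1) = insert (k + 1) (Set.Iic k) := by
    ext x; simp [Nat.le_succ_iff_eq_or_le]
  have h2 : Wsp μ hμc α (k + 1)
      = Submodule.span ℂ {gfun μ hμc α (k + 1)} ⊔ Wsp μ hμc α k := by
    simp only [Wsp, h1, Set.image_insert_eq, Submodule.span_insert]
  rw [Ffun, Ffun, h2]
  haveI := finiteDimensional_Wsp μ hμc α k
  refine le_trans (Submodule.finrank_add_le_finrank_add_finrank _ _) ?_
  have h3 : Module.finrank ℂ (Submodule.span ℂ {gfun μ hμc α (k + 1)}) ≤ 1 := by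
    rcases eq_or_ne (gfun μ hμc α (k + 1)) 0 with h | h
    · rw [h, Submodule.span_zero_singleton]
      simp
    · rw [finrank_span_singleton h]
  omega

lemma Ffun_zero (hμ0 : μ ≠ 0) (hα0 : α 0 = 0) : Ffun μ hμc α 0 = 1 := by
  have h1 : (Set.Iic (0 : ℕ)) = {0} := by ext x; simp [Nat.le_zero]
  have hg : gfun μ hμc α 0 = phiL μ hμc 1 := by
    rw [gfun, hα0, MvPolynomial.monomial_zero', MvPolynomial.C_1]
  have hne : gfun μ hμc α 0 ≠ 0 := by
    intro h
    have h2 : inner2 μ 1 1 = (0 : ℂ) := by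
      rw [← inner_phiL μ hμc 1 1, ← hg, h, inner_zero_left]
    rw [inner2] at h2
    have h2' : ∫ _z, (1 : ℂ) ∂μ = 0 := by simpa using h2
    rw [integral_const] at h2'
    have h3 : μ Set.univ ≠ 0 := by
      simpa [Measure.measure_univ_eq_zero] using hμ0
    have h4 : (μ Set.univ).toReal ≠ 0 :=
      ENNReal.toReal_ne_zero.mpr ⟨h3, measure_ne_top μ _⟩
    rw [Complex.real_smul, mul_one] at h2'
    exact h4 (by exact_mod_cast h2')
  rw [Ffun, Wsp, h1, Set.image_singleton, finrank_span_singleton hne]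

lemma mem_Wsp_of_degLE (hsurj : Function.Surjective α) {Q : MvPolynomial (Fin d) ℂ} {k : ℕ}
    (hQ : DegLE α Q k) : phiL μ hμc Q ∈ Wsp μ hμc α k := by
  have hrep : Q = ∑ v ∈ Q.support, MvPolynomial.coeff v Q • MvPolynomial.monomial v (1 : ℂ) := by
    conv_lhs => rw [MvPolynomial.as_sum Q]
    exact Finset.sum_congr rfl fun v _ => by rw [MvPolynomial.smul_monomial, smul_eq_mul, mul_one]
  rw [hrep, map_sum]
  refine Submodule.sum_mem _ fun v hv => ?_
  rw [_root_.map_smul]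
  obtain ⟨m, rfl⟩ := hsurj v
  refine Submodule.smul_mem _ _ (Submodule.subset_span ⟨m, ?_, rfl⟩)
  exact hQ m (by simpa [MvPolynomial.mem_support_iff] using hv)

end WF


section Kdeg

variable (μ : Measure (Fin d → ℂ)) [IsFiniteMeasure μ] (hμc : IsCompact (msupport μ))
  (α : ℕ → (Fin d →₀ ℕ))

lemma Ffun_kdeg (hμ0 : μ ≠ 0) (hα0 : α 0 = 0)
    (hrank : ∀ m : ℕ, ∃ k : ℕ, m + 1 ≤ (momentMatrix μ α k).rank) (n : ℕ) :
    Ffun μ hμc α (kdeg μ α n) = n + 1 ∧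
      ∀ j, Ffun μ hμc α j = n + 1 → kdeg μ α n ≤ j := by
  have hstep : ∀ j, Ffun μ hμc α j ≤ Ffun μ hμc α (j + 1) ∧
      Ffun μ hμc α (j + 1) ≤ Ffun μ hμc α j + 1 :=
    fun j => ⟨Ffun_mono μ hμc α (Nat.le_succ j), Ffun_step μ hμc α j⟩
  have hne : {j | (momentMatrix μ α j).rank = n + 1}.Nonempty := by
    obtain ⟨K, hK⟩ := hrank n
    rw [rank_momentMatrix_eq μ hμc α] at hK
    obtain ⟨j, -, hj⟩ := exists_eq_of_le' (Ffun_zero μ hμc α hμ0 hα0) hstep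
      (by omega) hK
    exact ⟨j, by rw [Set.mem_setOf_eq, rank_momentMatrix_eq μ hμc α]; exact hj⟩
  constructor
  · have h := Nat.sInf_mem hne
    rw [Set.mem_setOf_eq, rank_momentMatrix_eq μ hμc α] at h
    exact h
  · intro j hj
    exact Nat.sInf_le (by rw [Set.mem_setOf_eq, rank_momentMatrix_eq μ hμc α]; exact hj)

lemma Ffun_between (hμ0 : μ ≠ 0) (hα0 : α 0 = 0)
    (hrank : ∀ m : ℕ, ∃ k : ℕ, m + 1 ≤ (momentMatrix μ α k).rank) {n k : ℕ}
    (hk1 : kdeg μ α n ≤ k) (hk2 : k < kdeg μ α (n + 1)) :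
    Ffun μ hμc α k = n + 1 := by
  have hstep : ∀ j, Ffun μ hμc α j ≤ Ffun μ hμc α (j + 1) ∧
      Ffun μ hμc α (j + 1) ≤ Ffun μ hμc α j + 1 :=
    fun j => ⟨Ffun_mono μ hμc α (Nat.le_succ j), Ffun_step μ hμc α j⟩
  obtain ⟨h1, -⟩ := Ffun_kdeg μ hμc α hμ0 hα0 hrank n
  obtain ⟨-, h2⟩ := Ffun_kdeg μ hμc α hμ0 hα0 hrank (n + 1)
  have hlow : n + 1 ≤ Ffun μ hμc α k := h1 ▸ Ffun_mono μ hμc α hk1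
  by_contra hne
  have hhi : n + 2 ≤ Ffun μ hμc α k := by omega
  obtain ⟨j, hj, hje⟩ := exists_eq_of_le' (Ffun_zero μ hμc α hμ0 hα0) hstep (by omega) hhi
  have := h2 j hje
  omega

include hμc in
lemma kdeg_mono (hμ0 : μ ≠ 0) (hα0 : α 0 = 0)
    (hrank : ∀ m : ℕ, ∃ k : ℕ, m + 1 ≤ (momentMatrix μ α k).rank) :
    Monotone (kdeg μ α) := by
  have hstep : ∀ j, Ffun μ hμc α j ≤ Ffun μ hμc α (j + 1) ∧
      Ffun μ hμc α (j + 1) ≤ Ffun μ hμc α j + 1 :=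
    fun j => ⟨Ffun_mono μ hμc α (Nat.le_succ j), Ffun_step μ hμc α j⟩
  refine monotone_nat_of_le_succ fun i => ?_
  obtain ⟨h1, -⟩ := Ffun_kdeg μ hμc α hμ0 hα0 hrank (i + 1)
  obtain ⟨-, h2⟩ := Ffun_kdeg μ hμc α hμ0 hα0 hrank i
  obtain ⟨j, hj, hje⟩ := exists_eq_of_le' (Ffun_zero μ hμc α hμ0 hα0) hstep
    (by omega) (by omega : i + 1 ≤ Ffun μ hμc α (kdeg μ α (i + 1)))
  exact (h2 j hje).trans hj

end Kdeg


/-- Projection onto `ℒ_n(μ)` via the Christoffel–Darboux kernel, and the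
characterization of `𝒩_n(μ)` by orthogonality. -/
theorem statement1 (μ : Measure (Fin d → ℂ)) [IsFiniteMeasure μ]
    (hμ0 : μ ≠ 0) (hμc : IsCompact (msupport μ))
    (α : ℕ → (Fin d →₀ ℕ)) (hα : AdmissibleEnum α)
    (hrank : ∀ m : ℕ, ∃ k : ℕ, m + 1 ≤ (momentMatrix μ α k).rank)
    (p : ℕ → MvPolynomial (Fin d) ℂ) (hp : IsONBasis μ α p)
    (k n : ℕ) (hk1 : kdeg μ α n ≤ k) (hk2 : k < kdeg μ α (n + 1))
    (P : MvPolynomial (Fin d) ℂ) (hP : DegLE α P k) :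
    (∃ q : MvPolynomial (Fin d) ℂ,
      (∀ z : Fin d → ℂ,
        MvPolynomial.eval z q = ∫ w, CDkernel p n z w * MvPolynomial.eval w P ∂μ) ∧
      q ∈ Lspan p n ∧ P - q ∈ NidealLE μ α (n + 1)) ∧
    (k = kdeg μ α n →
      NidealLE μ α n =
        {Q : MvPolynomial (Fin d) ℂ |
          DegLE α Q (kdeg μ α n) ∧ ∀ j ≤ n, inner2 μ Q (p j) = 0}) := by
  classical
  obtain ⟨hbij, hα0, -⟩ := hα
  have hmono := kdeg_mono μ hμc α hμ0 hα0 hrank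
  have hFk : Ffun μ hμc α k = n + 1 := Ffun_between μ hμc α hμ0 hα0 hrank hk1 hk2
  set φ := phiL μ hμc with hφ
  set e : Fin (n + 1) → Lp ℂ 2 μ := fun j => φ (p (j : ℕ)) with he
  have hinner_e : ∀ (Q : MvPolynomial (Fin d) ℂ) (j : Fin (n + 1)),
      (inner ℂ (e j) (φ Q) : ℂ) = inner2 μ Q (p (j : ℕ)) :=
    fun Q j => inner_phiL μ hμc _ _
  have hON : Orthonormal ℂ e := by
    rw [orthonormal_iff_ite]
    intro i j
    have h := (hp n).1 (j : ℕ) (Nat.lt_succ_iff.mp j.isLt) (i : ℕ) (Nat.lt_succ_iff.mp i.isLt)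
    have hinner : (inner ℂ (e i) (e j) : ℂ) = inner2 μ (p (j : ℕ)) (p (i : ℕ)) :=
      inner_phiL μ hμc _ _
    rw [hinner, h]
    rcases eq_or_ne i j with rfl | hij
    · simp
    · rw [if_neg (fun hc => hij ((Fin.ext hc).symm)), if_neg hij]
  have hpj_mem : ∀ j : Fin (n + 1), e j ∈ Wsp μ hμc α k := by
    intro j
    obtain ⟨c, -, -, hrep⟩ := (hp n).2 (j : ℕ) (Nat.lt_succ_iff.mp j.isLt)
    show φ (p (j : ℕ)) ∈ _
    rw [hrep, map_sum]
    refine Submodule.sum_mem _ fun i _ => ?_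
    have h1 : (MvPolynomial.monomial (α (kdeg μ α (i : ℕ))) (c i))
        = c i • MvPolynomial.monomial (α (kdeg μ α (i : ℕ))) (1 : ℂ) := by
      rw [MvPolynomial.smul_monomial, smul_eq_mul, mul_one]
    rw [h1, _root_.map_smul]
    refine Submodule.smul_mem _ _ (Submodule.subset_span ⟨kdeg μ α (i : ℕ), ?_, rfl⟩)
    have hij : (i : ℕ) ≤ n :=
      le_trans (Nat.lt_succ_iff.mp i.isLt) (Nat.lt_succ_iff.mp j.isLt)
    exact Set.mem_Iic.mpr (le_trans (hmono hij) hk1)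
  haveI := finiteDimensional_Wsp μ hμc α k
  have hSW : Submodule.span ℂ (Set.range e) = Wsp μ hμc α k := by
    refine Submodule.eq_of_le_of_finrank_eq ?_ ?_
    · rw [Submodule.span_le]
      rintro _ ⟨j, rfl⟩
      exact hpj_mem j
    · rw [finrank_span_eq_card hON.linearIndependent, Fintype.card_fin]
      exact hFk.symm
  have hrepr : ∀ Q : MvPolynomial (Fin d) ℂ, DegLE α Q k →
      ∑ j, (inner ℂ (e j) (φ Q) : ℂ) • e j = φ Q := fun Q hQ =>
    span_repr hON (hSW ▸ mem_Wsp_of_degLE μ hμc α hbij.surjective hQ)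
  set q : MvPolynomial (Fin d) ℂ := ∑ j ∈ Finset.range (n + 1), inner2 μ P (p j) • p j
    with hq
  have hφq : φ q = φ P := by
    rw [hq, map_sum]
    have h1 : ∑ j ∈ Finset.range (n + 1), φ (inner2 μ P (p j) • p j)
        = ∑ j : Fin (n + 1), (inner ℂ (e j) (φ P) : ℂ) • e j := by
      rw [Finset.sum_range fun j => φ (inner2 μ P (p j) • p j)]
      refine Finset.sum_congr rfl fun j _ => ?_
      rw [_root_.map_smul, hinner_e]
    rw [h1, hrepr P hP]
  have hq_zero : ∀ z ∈ msupport μ, MvPolynomial.eval z (P - q) = 0 := by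
    have h0 : φ (P - q) = 0 := by rw [map_sub, hφq, sub_self]
    exact fun z hz => eval_eq_zero_on_msupport ((phiL_eq_zero_iff μ hμc (P - q)).mp h0) z hz
  have hdeg_q : ∀ m, MvPolynomial.coeff (α m) q ≠ 0 → m ≤ kdeg μ α n := by
    intro m h
    rw [hq, MvPolynomial.coeff_sum] at h
    obtain ⟨j, hj, hjne⟩ := Finset.exists_ne_zero_of_sum_ne_zero h
    rw [MvPolynomial.coeff_smul] at hjne
    have hj' : MvPolynomial.coeff (α m) (p j) ≠ 0 := fun hc => hjne (by rw [hc, smul_zero])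
    obtain ⟨c, -, -, hrep⟩ := (hp n).2 j (Nat.lt_succ_iff.mp (Finset.mem_range.mp hj))
    rw [hrep, MvPolynomial.coeff_sum] at hj'
    obtain ⟨i, -, hine⟩ := Finset.exists_ne_zero_of_sum_ne_zero hj'
    rw [MvPolynomial.coeff_monomial] at hine
    have heq : α (kdeg μ α (i : ℕ)) = α m := by
      by_contra hne2
      exact hine (if_neg hne2)
    have hmi : m = kdeg μ α (i : ℕ) := (hbij.injective heq).symm
    have hin : (i : ℕ) ≤ n :=
      le_trans (Nat.lt_succ_iff.mp i.isLt) (Nat.lt_succ_iff.mp (Finset.mem_range.mp hj))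
    exact hmi ▸ hmono hin
  refine ⟨⟨q, ?_, ?_, ?_, ?_⟩, ?_⟩
  · -- the integral formula
    intro z
    have hint : ∀ j : ℕ, Integrable (fun w =>
        MvPolynomial.eval z (p j) * (starRingEnd ℂ) (MvPolynomial.eval w (p j)) *
          MvPolynomial.eval w P) μ := by
      intro j
      apply integrable_of_cont hμc
      exact (continuous_const.mul
        (continuous_star.comp (MvPolynomial.continuous_eval (p j)))).mul
        (MvPolynomial.continuous_eval P)
    have h1 : ∫ w, CDkernel p n z w * MvPolynomial.eval w P ∂μ
        = ∑ j ∈ Finset.range (n + 1), ∫ w,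
            MvPolynomial.eval z (p j) * (starRingEnd ℂ) (MvPolynomial.eval w (p j)) *
              MvPolynomial.eval w P ∂μ := by
      rw [← integral_finset_sum _ fun j _ => hint j]
      refine integral_congr_ae (Filter.Eventually.of_forall fun w => ?_)
      simp only [CDkernel, Finset.sum_mul]
    rw [h1]
    have h2 : MvPolynomial.eval z q
        = ∑ j ∈ Finset.range (n + 1), inner2 μ P (p j) * MvPolynomial.eval z (p j) := by
      rw [hq, map_sum]
      exact Finset.sum_congr rfl fun j _ => MvPolynomial.smul_eval _ _ _
    rw [h2]
    refine Finset.sum_congr rfl fun j _ => ?_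
    calc inner2 μ P (p j) * MvPolynomial.eval z (p j)
        = MvPolynomial.eval z (p j) * inner2 μ P (p j) := mul_comm _ _
      _ = _ := by
          rw [inner2, ← integral_const_mul]
          refine integral_congr_ae (Filter.Eventually.of_forall fun w => ?_)
          ring
  · -- q ∈ Lspan p n
    exact ⟨fun j => inner2 μ P (p (j : ℕ)),
      by rw [hq, Finset.sum_range fun j => inner2 μ P (p j) • p j]⟩
  · -- P - q vanishes on the support
    exact hq_zero
  · -- degree bound for P - q
    intro m hm
    have hor : MvPolynomial.coeff (α m) P ≠ 0 ∨ MvPolynomial.coeff (α m) q ≠ 0 := by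
      by_contra hcon
      push_neg at hcon
      rw [MvPolynomial.coeff_sub] at hm
      exact hm (by rw [hcon.1, hcon.2, sub_zero])
    rcases hor with h | h
    · exact le_trans (hP m h) (le_of_lt hk2)
    · exact le_trans (hdeg_q m h) (le_trans hk1 (le_of_lt hk2))
  · -- the characterization of 𝒩_n(μ)
    intro hkk
    ext Q
    simp only [NidealLE, Nideal, Set.mem_setOf_eq]
    constructor
    · rintro ⟨hQ0, hQdeg⟩
      refine ⟨hQdeg, fun j hj => ?_⟩
      rw [inner2]
      refine integral_eq_zero_of_ae ?_
      filter_upwards [ae_mem_msupport μ] with z hz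
      rw [hQ0 z hz, zero_mul]
      rfl
    · rintro ⟨hQdeg, hQinner⟩
      refine ⟨?_, hQdeg⟩
      have hQk : DegLE α Q k := hkk ▸ hQdeg
      have h2 : ∀ j : Fin (n + 1), (inner ℂ (e j) (φ Q) : ℂ) = 0 := fun j => by
        rw [hinner_e, hQinner (j : ℕ) (Nat.lt_succ_iff.mp j.isLt)]
      have h3 : φ Q = 0 := by
        rw [← hrepr Q hQk]
        exact Finset.sum_eq_zero fun j _ => by rw [h2 j, zero_smul]
      exact fun z hz => eval_eq_zero_on_msupport ((phiL_eq_zero_iff μ hμc Q).mp h3) z hz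


end CD
end
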